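/- Let p_1, …, p_n : [β,γ] → B(X) and q : [β,γ] → X be continuous. For each ζ ∈ [β,γ], let the principal solution 𝒳(·,ζ) : [α,γ] → B(X) be a function satisfying: 𝒳(t,ζ) = 0 for all t ∈ [α,ζ); 𝒳(ζ,ζ) = id_X; 𝒳(·,ζ) is continuous on [ζ,γ]; and 𝒳(·,ζ) is differentiable on [ζ,γ] with ∂_t 𝒳(t,ζ) = Σ_{i=1}^{n} p_i(t) ∘ 𝒳(τ_i(t),ζ) for all t ∈ [ζ,γ]. If x : [α,γ] → X is continuous with x(t) = φ(t) for t ∈ [α,β] and differentiable on [β,γ] with x′(t) = Σ_{i=1}^{n} p_i(t) x(τ_i(t)) + q(t) for all t ∈ [β,γ], then for all t ∈ [β,γ]: x(t) = 𝒳(t,β) φ(β) + ∫_β^t 𝒳(t,s) q(s) ds + ∫_β^t 𝒳(t,s) ( Σ_{i=1}^{n} χ_{[α,β)}(τ_i(s)) · p_i(s) φ(τ_i(s)) ) ds, where χ_{[α,β)}(r) = 1 if α ≤ r < β and χ_{[α,β)}(r) = 0 otherwise. -/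

import Mathlib

set_option maxHeartbeats 1000000
set_option synthInstance.maxHeartbeats 400000

open Set MeasureTheory Filter

private lemma sm_finset_sum {ι α E : Type*} {mα : MeasurableSpace α} [NormedAddCommGroup E]
    (s : Finset ι) {F : ι → α → E} (h : ∀ i, StronglyMeasurable (F i)) :
    StronglyMeasurable (fun a => ∑ i ∈ s, F i a) := by
  classical
  induction s using Finset.induction_on with
  | empty => simpa using stronglyMeasurable_const
  | insert a s hi ih =>
    simp only [Finset.sum_insert hi]
    exact (h _).add ih

/-- Picard iterates for the principal solution. -/
private noncomputable def pic {X : Type*} [NormedAddCommGroup X] [NormedSpace ℝ X]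
    [CompleteSpace X] {n : ℕ} (p' : Fin n → ℝ → X →L[ℝ] X) (τ' : Fin n → ℝ → ℝ) (γ : ℝ) :
    ℕ → ℝ → ℝ → X →L[ℝ] X
  | 0 => fun r s => if s ≤ r then ContinuousLinearMap.id ℝ X else 0
  | (k+1) => fun r s => if s ≤ r then
      ContinuousLinearMap.id ℝ X +
        ∫ u in Ioc s (min r γ), ∑ i, (p' i u).comp (pic p' τ' γ k (τ' i u) s)
      else 0

private lemma pic_of_lt {X : Type*} [NormedAddCommGroup X] [NormedSpace ℝ X]
    [CompleteSpace X] {n : ℕ} (p' : Fin n → ℝ → X →L[ℝ] X) (τ' : Fin n → ℝ → ℝ) (γ : ℝ)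
    (k : ℕ) {r s : ℝ} (h : r < s) : pic p' τ' γ k r s = 0 := by
  cases k <;> simp [pic, not_le.2 h]

/-- Variation of parameters (solution representation) formula for linear delay
differential equations in terms of the principal solution `𝒳`
(continuous-time case). -/
theorem linear_delay_variation_of_parameters
    {X : Type*} [NormedAddCommGroup X] [NormedSpace ℝ X] [CompleteSpace X]
    {n : ℕ} (hn : 0 < n)
    {α β γ : ℝ} (hαβ : α ≤ β) (hβγ : β < γ)
    (τ : Fin n → ℝ → ℝ)
    (hτc : ∀ i, ContinuousOn (τ i) (Icc β γ))
    (hτ : ∀ i, ∀ t ∈ Icc β γ, α ≤ τ i t ∧ τ i t ≤ t)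
    (φ : ℝ → X) (hφ : ContinuousOn φ (Icc α β))
    (p : Fin n → ℝ → X →L[ℝ] X) (hp : ∀ i, ContinuousOn (p i) (Icc β γ))
    (q : ℝ → X) (hq : ContinuousOn q (Icc β γ))
    -- the principal solution `𝒳(t, ζ) = XX t ζ`
    (XX : ℝ → ℝ → X →L[ℝ] X)
    (hXX0 : ∀ ζ ∈ Icc β γ, ∀ t ∈ Ico α ζ, XX t ζ = 0)
    (hXXinit : ∀ ζ ∈ Icc β γ, XX ζ ζ = ContinuousLinearMap.id ℝ X)
    (hXXc : ∀ ζ ∈ Icc β γ, ContinuousOn (fun t => XX t ζ) (Icc ζ γ))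
    (hXXder : ∀ ζ ∈ Icc β γ, ∀ t ∈ Icc ζ γ,
      HasDerivWithinAt (fun t => XX t ζ)
        (∑ i, (p i t).comp (XX (τ i t) ζ)) (Icc ζ γ) t)
    -- the solution of the linear delay initial value problem
    (x : ℝ → X) (hxc : ContinuousOn x (Icc α γ))
    (hxφ : ∀ t ∈ Icc α β, x t = φ t)
    (hx : ∀ t ∈ Icc β γ,
      HasDerivWithinAt x (∑ i, p i t (x (τ i t)) + q t) (Icc β γ) t) :
    ∀ t ∈ Icc β γ,
      x t = XX t β (φ β) + (∫ s in β..t, XX t s (q s)) +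
        ∫ s in β..t, XX t s
          (∑ i, if α ≤ τ i s ∧ τ i s < β then p i s (φ (τ i s)) else 0) := by
  have hβγ' : β ≤ γ := hβγ.le
  have hαγ : α ≤ γ := hαβ.trans hβγ'
  have hγβ0 : (0:ℝ) ≤ γ - β := by linarith
  -- clamp to [β,γ]
  obtain ⟨cl, hcl_cont, hcl_mem, hcl_eq⟩ :
      ∃ cl : ℝ → ℝ, Continuous cl ∧ (∀ u, cl u ∈ Icc β γ) ∧ ∀ u ∈ Icc β γ, cl u = u := by
    refine ⟨fun u => max β (min γ u), by fun_prop, fun u => ⟨le_max_left _ _, ?_⟩, fun u hu => ?_⟩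
    · exact max_le hβγ' (min_le_left _ _)
    · simp [min_eq_right hu.2, max_eq_right hu.1]
  -- globalized data
  obtain ⟨τ', hτ'c, hτ'eq, hτ'mem, hτ'le⟩ :
      ∃ τ' : Fin n → ℝ → ℝ, (∀ i, Continuous (τ' i)) ∧ (∀ i, ∀ u ∈ Icc β γ, τ' i u = τ i u) ∧
        (∀ i u, τ' i u ∈ Icc α γ) ∧ (∀ i, ∀ u ∈ Icc β γ, τ' i u ≤ u) := by
    refine ⟨fun i u => τ i (cl u), fun i => (hτc i).comp_continuous hcl_cont hcl_mem,
      fun i u hu => by simp only [hcl_eq u hu], fun i u => ?_, fun i u hu => ?_⟩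
    · obtain ⟨h1, h2⟩ := hτ i (cl u) (hcl_mem u)
      exact ⟨h1, h2.trans (hcl_mem u).2⟩
    · simp only [hcl_eq u hu]; exact (hτ i u hu).2
  -- bounds for p
  have hCex : ∀ i : Fin n, ∃ Ci : ℝ, 0 ≤ Ci ∧ ∀ u ∈ Icc β γ, ‖p i u‖ ≤ Ci := by
    intro i
    obtain ⟨Ci, hCi⟩ := isCompact_Icc.exists_bound_of_continuousOn (hp i)
    exact ⟨max Ci 0, le_max_right _ _,
      fun u hu => le_trans (by simpa using hCi u hu) (le_max_left _ _)⟩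
  choose C hC0 hCb using hCex
  set K : ℝ := ∑ i, C i with hKdef
  have hK0 : 0 ≤ K := Finset.sum_nonneg fun i _ => hC0 i
  obtain ⟨p', hp'c, hp'eq, hp'b⟩ :
      ∃ p' : Fin n → ℝ → X →L[ℝ] X, (∀ i, Continuous (p' i)) ∧
        (∀ i, ∀ u ∈ Icc β γ, p' i u = p i u) ∧ (∀ i u, ‖p' i u‖ ≤ C i) := by
    refine ⟨fun i u => p i (cl u), fun i => (hp i).comp_continuous hcl_cont hcl_mem,
      fun i u hu => by simp only [hcl_eq u hu], fun i u => hCb i _ (hcl_mem u)⟩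
  obtain ⟨q', hq'c, hq'eq, Cq, hCq0, hq'b⟩ :
      ∃ q' : ℝ → X, Continuous q' ∧ (∀ u ∈ Icc β γ, q' u = q u) ∧
        ∃ Cq, 0 ≤ Cq ∧ ∀ u, ‖q' u‖ ≤ Cq := by
    obtain ⟨Cq, hCq⟩ := isCompact_Icc.exists_bound_of_continuousOn hq
    refine ⟨fun u => q (cl u), hq.comp_continuous hcl_cont hcl_mem,
      fun u hu => by simp only [hcl_eq u hu], max Cq 0, le_max_right _ _,
      fun u => le_trans (by simpa using hCq _ (hcl_mem u)) (le_max_left _ _)⟩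
  obtain ⟨φ', hφ'c, hφ'eq, Cφ, hCφ0, hφ'b⟩ :
      ∃ φ' : ℝ → X, Continuous φ' ∧ (∀ r ∈ Icc α β, φ' r = φ r) ∧
        ∃ Cφ, 0 ≤ Cφ ∧ ∀ r, ‖φ' r‖ ≤ Cφ := by
    obtain ⟨cl2, hcl2_cont, hcl2_mem, hcl2_eq⟩ :
        ∃ cl2 : ℝ → ℝ, Continuous cl2 ∧ (∀ u, cl2 u ∈ Icc α β) ∧ ∀ u ∈ Icc α β, cl2 u = u := by
      refine ⟨fun u => max α (min β u), by fun_prop, fun u => ⟨le_max_left _ _, ?_⟩, fun u hu => ?_⟩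
      · exact max_le hαβ (min_le_left _ _)
      · simp [min_eq_right hu.2, max_eq_right hu.1]
    obtain ⟨Cφ, hCφ⟩ := isCompact_Icc.exists_bound_of_continuousOn hφ
    refine ⟨fun r => φ (cl2 r), hφ.comp_continuous hcl2_cont hcl2_mem,
      fun r hr => by simp only [hcl2_eq r hr], max Cφ 0, le_max_right _ _,
      fun r => le_trans (by simpa using hCφ _ (hcl2_mem r)) (le_max_left _ _)⟩
  -- bound for x
  obtain ⟨Mx, hMx0, hMx⟩ : ∃ Mx, 0 ≤ Mx ∧ ∀ r ∈ Icc α γ, ‖x r‖ ≤ Mx := by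
    obtain ⟨Mx, hMx⟩ := isCompact_Icc.exists_bound_of_continuousOn hxc
    exact ⟨max Mx 0, le_max_right _ _,
      fun r hr => le_trans (by simpa using hMx r hr) (le_max_left _ _)⟩
  -- sum estimates
  have hsum_comp : ∀ u ∈ Icc β γ, ∀ (A : Fin n → X →L[ℝ] X) (D : ℝ), 0 ≤ D →
      (∀ i, ‖A i‖ ≤ D) → ‖∑ i, (p i u).comp (A i)‖ ≤ K * D := by
    intro u hu A D hD0 hD
    calc ‖∑ i, (p i u).comp (A i)‖ ≤ ∑ i, ‖(p i u).comp (A i)‖ := norm_sum_le _ _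
    _ ≤ ∑ i, C i * D := by
        refine Finset.sum_le_sum fun i _ => ((p i u).opNorm_comp_le (A i)).trans ?_
        exact mul_le_mul (hCb i u hu) (hD i) (norm_nonneg _) (hC0 i)
    _ = K * D := by rw [hKdef, Finset.sum_mul]
  have hsum_app : ∀ u ∈ Icc β γ, ∀ (w : Fin n → X) (D : ℝ), 0 ≤ D →
      (∀ i, ‖w i‖ ≤ D) → ‖∑ i, (p i u) (w i)‖ ≤ K * D := by
    intro u hu w D hD0 hD
    calc ‖∑ i, (p i u) (w i)‖ ≤ ∑ i, ‖(p i u) (w i)‖ := norm_sum_le _ _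
    _ ≤ ∑ i, C i * D := by
        refine Finset.sum_le_sum fun i _ => ((p i u).le_opNorm (w i)).trans ?_
        exact mul_le_mul (hCb i u hu) (hD i) (norm_nonneg _) (hC0 i)
    _ = K * D := by rw [hKdef, Finset.sum_mul]
  -- uniform bound on XX
  set M : ℝ := Real.exp (K * (γ - β)) with hMdef
  have hM0 : 0 < M := Real.exp_pos _
  have hXXM : ∀ s ∈ Icc β γ, ∀ r ∈ Icc α γ, ‖XX r s‖ ≤ M := by
    intro s hs
    obtain ⟨Ms, hMs0, hMs⟩ : ∃ Ms, 0 ≤ Ms ∧ ∀ r ∈ Icc s γ, ‖XX r s‖ ≤ Ms := by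
      obtain ⟨Ms, hMs⟩ := isCompact_Icc.exists_bound_of_continuousOn (hXXc s hs)
      exact ⟨max Ms 0, le_max_right _ _, fun r hr => le_trans (hMs r hr) (le_max_left _ _)⟩
    have key : ∀ k : ℕ, ∀ r ∈ Icc s γ,
        ‖XX r s‖ ≤ Real.exp (K * (r - s)) + Ms * (K * (r - s)) ^ k / k.factorial := by
      intro k
      induction k with
      | zero =>
        intro r hr
        have h1 : (0:ℝ) < Real.exp (K * (r - s)) := Real.exp_pos _
        have h2 := hMs r hr
        simp only [pow_zero, Nat.factorial_zero, Nat.cast_one, mul_one]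
        linarith
      | succ k ih =>
        have hderiv : ∀ r' ∈ Ico s γ, HasDerivWithinAt (fun y => XX y s)
            (∑ i, (p i r').comp (XX (τ i r') s)) (Ici r') r' := by
          intro r' hr'
          refine (hXXder s hs r' ⟨hr'.1, hr'.2.le⟩).mono_of_mem_nhdsWithin ?_
          have h1 : Ici r' ∩ Iic γ ∈ nhdsWithin r' (Ici r') :=
            Filter.inter_mem self_mem_nhdsWithin
              (mem_nhdsWithin_of_mem_nhds (Iic_mem_nhds hr'.2))
          exact Filter.mem_of_superset h1 (fun y hy => ⟨hr'.1.trans hy.1, hy.2⟩)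
        have hBder : ∀ r' : ℝ, HasDerivAt
            (fun y => Real.exp (K * (y - s)) + Ms * (K * (y - s)) ^ (k+1) / (k+1).factorial)
            (K * (Real.exp (K * (r' - s)) + Ms * (K * (r' - s)) ^ k / k.factorial)) r' := by
          intro r'
          have h1 : HasDerivAt (fun y : ℝ => K * (y - s)) K r' := by
            simpa using ((hasDerivAt_id r').sub_const s).const_mul K
          have h2 : HasDerivAt (fun y => Real.exp (K * (y - s)))
              (Real.exp (K * (r' - s)) * K) r' := h1.exp
          have h3 : HasDerivAt (fun y => Ms * (K * (y - s)) ^ (k+1) / (k+1).factorial)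
              (Ms * ((k+1 : ℕ) * (K * (r' - s)) ^ k * K) / (k+1).factorial) r' :=
            ((h1.pow (k+1)).const_mul Ms).div_const _
          have h4 := h2.add h3
          refine h4.congr_deriv ?_
          have hfac : ((k+1).factorial : ℝ) = (k+1) * k.factorial := by
            push_cast [Nat.factorial_succ]; ring
          rw [hfac]
          push_cast
          field_simp
        intro r hr
        refine image_norm_le_of_norm_deriv_right_le_deriv_boundary
          (f := fun y => XX y s) (a := s) (b := γ)
          ((hXXc s hs)) hderiv ?_ hBder ?_ hr
        · simp only [hXXinit s hs, sub_self, mul_zero, Real.exp_zero, zero_pow (Nat.succ_ne_zero k), zero_div, add_zero]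
          exact ContinuousLinearMap.norm_id_le
        · intro r' hr'
          have hr'bg : r' ∈ Icc β γ := ⟨hs.1.trans hr'.1, hr'.2.le⟩
          have hD0 : 0 ≤ Real.exp (K * (r' - s)) + Ms * (K * (r' - s)) ^ k / k.factorial := by
            have : 0 ≤ K * (r' - s) := mul_nonneg hK0 (sub_nonneg.2 hr'.1)
            positivity
          refine le_trans (hsum_comp r' hr'bg _ _ hD0 ?_) (le_of_eq rfl)
          intro i
          rcases lt_or_ge (τ i r') s with hτs | hτs
          · rw [hXX0 s hs (τ i r') ⟨(hτ i r' hr'bg).1, hτs⟩]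
            simpa using hD0
          · have hτmem : τ i r' ∈ Icc s γ := ⟨hτs, (hτ i r' hr'bg).2.trans hr'.2.le⟩
            refine (ih (τ i r') hτmem).trans ?_
            have hle : K * (τ i r' - s) ≤ K * (r' - s) :=
              mul_le_mul_of_nonneg_left (sub_le_sub_right (hτ i r' hr'bg).2 s) hK0
            have h0 : 0 ≤ K * (τ i r' - s) := mul_nonneg hK0 (sub_nonneg.2 hτs)
            have hexp : Real.exp (K * (τ i r' - s)) ≤ Real.exp (K * (r' - s)) :=
              Real.exp_le_exp.2 hle
            have hpow : (K * (τ i r' - s)) ^ k ≤ (K * (r' - s)) ^ k :=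
              pow_le_pow_left₀ h0 hle k
            have hfac : (0:ℝ) < k.factorial := by positivity
            have : Ms * (K * (τ i r' - s)) ^ k / k.factorial
                ≤ Ms * (K * (r' - s)) ^ k / k.factorial := by
              gcongr <;> first | exact h0 | exact hle | positivity
            linarith
    intro r hr
    rcases lt_or_ge r s with hrs | hrs
    · rw [hXX0 s hs r ⟨hr.1, hrs⟩]
      simpa using hM0.le
    · have htend : Tendsto (fun k : ℕ => Real.exp (K * (r - s)) + Ms * (K * (r - s)) ^ k / k.factorial)
          atTop (nhds (Real.exp (K * (r - s)) + 0)) := by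
        refine tendsto_const_nhds.add ?_
        simpa [mul_div_assoc] using
          (FloorSemiring.tendsto_pow_div_factorial_atTop (K := ℝ) (K * (r - s))).const_mul Ms
      have h2 : ‖XX r s‖ ≤ Real.exp (K * (r - s)) + 0 :=
        ge_of_tendsto' htend (fun k => key k r ⟨hrs, hr.2⟩)
      rw [add_zero] at h2
      refine h2.trans ?_
      rw [hMdef]
      exact Real.exp_le_exp.2 (mul_le_mul_of_nonneg_left (by linarith [hr.2, hs.1] : r - s ≤ γ - β) hK0)
  -- measurable extension of sections r ↦ XX r ζ
  have hXXsec : ∀ ζ ∈ Icc β γ, ∃ g : ℝ → X →L[ℝ] X, StronglyMeasurable g ∧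
      (∀ r ∈ Icc α γ, g r = XX r ζ) ∧ (∀ r, ‖g r‖ ≤ M) := by
    intro ζ hζ
    have hζγ : ζ ≤ γ := hζ.2
    set cl3 : ℝ → ℝ := fun r => max ζ (min γ r) with hcl3
    have hcl3_cont : Continuous cl3 := by fun_prop
    have hcl3_mem : ∀ r, cl3 r ∈ Icc ζ γ := fun r =>
      ⟨le_max_left _ _, max_le hζγ (min_le_left _ _)⟩
    have hcl3_eq : ∀ r ∈ Icc ζ γ, cl3 r = r := fun r hr => by
      simp [hcl3, min_eq_right hr.2, max_eq_right hr.1]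
    have hcont : Continuous (fun r => XX (cl3 r) ζ) :=
      (hXXc ζ hζ).comp_continuous hcl3_cont hcl3_mem
    refine ⟨Set.indicator (Ici ζ) (fun r => XX (cl3 r) ζ),
      hcont.stronglyMeasurable.indicator measurableSet_Ici, ?_, ?_⟩
    · intro r hr
      rcases lt_or_ge r ζ with h | h
      · rw [Set.indicator_of_notMem (by simpa using not_le.2 h), hXX0 ζ hζ r ⟨hr.1, h⟩]
      · rw [Set.indicator_of_mem (mem_Ici.2 h), hcl3_eq r ⟨h, hr.2⟩]
    · intro r
      rcases le_or_gt ζ r with h | h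
      · rw [Set.indicator_of_mem (mem_Ici.2 h)]
        exact hXXM ζ hζ (cl3 r) ⟨hαβ.trans (hζ.1.trans (hcl3_mem r).1), (hcl3_mem r).2⟩
      · rw [Set.indicator_of_notMem (by simpa using not_le.2 h)]
        simpa using hM0.le
  -- integral equation for XX
  have int2 : ∀ ζ ∈ Icc β γ,
      IntervalIntegrable (fun u => ∑ i, (p i u).comp (XX (τ i u) ζ)) volume ζ γ := by
    intro ζ hζ
    obtain ⟨g, hgm, hgeq, hgb⟩ := hXXsec ζ hζ
    rw [intervalIntegrable_iff_integrableOn_Ioc_of_le hζ.2]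
    have hmeas : StronglyMeasurable (fun u => ∑ i, (p' i u).comp (g (τ' i u))) := by
      refine sm_finset_sum Finset.univ fun i => ?_
      have h1 : StronglyMeasurable (fun u => g (τ' i u)) :=
        hgm.comp_measurable (hτ'c i).measurable
      have h2 : StronglyMeasurable (fun u => (p' i u, g (τ' i u))) :=
        (hp'c i).stronglyMeasurable.prodMk h1
      exact (isBoundedBilinearMap_comp (𝕜 := ℝ) (E := X) (F := X)
        (G := X)).continuous.comp_stronglyMeasurable h2
    have heq : ∀ u ∈ Ioc ζ γ,
        (fun u => ∑ i, (p' i u).comp (g (τ' i u))) u = ∑ i, (p i u).comp (XX (τ i u) ζ) := by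
      intro u hu
      have hubg : u ∈ Icc β γ := ⟨hζ.1.trans hu.1.le, hu.2⟩
      refine Finset.sum_congr rfl fun i _ => ?_
      rw [hp'eq i u hubg, hτ'eq i u hubg,
        hgeq _ ⟨(hτ i u hubg).1, (hτ i u hubg).2.trans hubg.2⟩]
    have hint : IntegrableOn (fun u => ∑ i, (p' i u).comp (g (τ' i u))) (Ioc ζ γ) volume := by
      haveI : IsFiniteMeasure (volume.restrict (Ioc ζ γ)) :=
        ⟨by rw [Measure.restrict_apply_univ]; exact measure_Ioc_lt_top⟩
      refine Integrable.mono' (integrable_const (K * M)) hmeas.aestronglyMeasurable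
        (ae_of_all _ fun u => ?_)
      calc ‖∑ i, (p' i u).comp (g (τ' i u))‖ ≤ ∑ i, C i * M := by
            refine (norm_sum_le _ _).trans (Finset.sum_le_sum fun i _ => ?_)
            exact ((p' i u).opNorm_comp_le _).trans
              (mul_le_mul (hp'b i u) (hgb _) (norm_nonneg _) (hC0 i))
      _ = K * M := by rw [hKdef, Finset.sum_mul]
    exact hint.congr_fun heq measurableSet_Ioc
  have step2 : ∀ ζ ∈ Icc β γ, ∀ r ∈ Icc ζ γ, XX r ζ =
      ContinuousLinearMap.id ℝ X + ∫ u in ζ..r, ∑ i, (p i u).comp (XX (τ i u) ζ) := by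
    intro ζ hζ r hr
    have hint : IntervalIntegrable (fun u => ∑ i, (p i u).comp (XX (τ i u) ζ)) volume ζ r := by
      refine (int2 ζ hζ).mono_set ?_
      rw [Set.uIcc_of_le hr.1, Set.uIcc_of_le hζ.2]
      exact Icc_subset_Icc le_rfl hr.2
    have hFTC := intervalIntegral.integral_eq_sub_of_hasDeriv_right_of_le hr.1
      (f := fun y => XX y ζ) ((hXXc ζ hζ).mono (Icc_subset_Icc le_rfl hr.2)) ?_ hint
    · simp only [hFTC, hXXinit ζ hζ]; abel
    · intro u hu
      refine (hXXder ζ hζ u ⟨hu.1.le, hu.2.le.trans hr.2⟩).mono_of_mem_nhdsWithin ?_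
      have h1 : Ioi u ∩ Iic γ ∈ nhdsWithin u (Ioi u) :=
        Filter.inter_mem self_mem_nhdsWithin
          (mem_nhdsWithin_of_mem_nhds (Iic_mem_nhds (lt_of_lt_of_le hu.2 hr.2)))
      exact Filter.mem_of_superset h1 (fun y hy => ⟨hu.1.le.trans hy.1.le, hy.2⟩)
  -- Picard iterates: measurability and convergence
  have picm : ∀ k, StronglyMeasurable (fun rs : ℝ × ℝ => pic p' τ' γ k rs.1 rs.2) := by
    intro k
    induction k with
    | zero =>
      simp only [pic]
      exact StronglyMeasurable.ite (measurableSet_le measurable_snd measurable_fst)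
        stronglyMeasurable_const stronglyMeasurable_const
    | succ k ih =>
      simp only [pic]
      refine StronglyMeasurable.ite (measurableSet_le measurable_snd measurable_fst)
        (stronglyMeasurable_const.add ?_) stronglyMeasurable_const
      have hF : StronglyMeasurable (fun z : (ℝ × ℝ) × ℝ =>
          (Ioc z.1.2 (min z.1.1 γ)).indicator
            (fun u => ∑ i, (p' i u).comp (pic p' τ' γ k (τ' i u) z.1.2)) z.2) := by
        have hs : MeasurableSet {z : (ℝ × ℝ) × ℝ | z.2 ∈ Ioc z.1.2 (min z.1.1 γ)} := by
          simp only [mem_Ioc]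
          exact (measurableSet_lt (f := fun z : (ℝ × ℝ) × ℝ => z.1.2) (g := fun z => z.2)
            (by fun_prop) (by fun_prop)).inter
            (measurableSet_le (f := fun z : (ℝ × ℝ) × ℝ => z.2) (g := fun z => min z.1.1 γ)
              (by fun_prop) (by fun_prop))
        have hinner : StronglyMeasurable (fun z : (ℝ × ℝ) × ℝ =>
            ∑ i, (p' i z.2).comp (pic p' τ' γ k (τ' i z.2) z.1.2)) := by
          refine sm_finset_sum Finset.univ fun i => ?_
          have h1 : StronglyMeasurable (fun z : (ℝ × ℝ) × ℝ => pic p' τ' γ k (τ' i z.2) z.1.2) :=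
            ih.comp_measurable
              (((hτ'c i).measurable.comp measurable_snd).prodMk
                (measurable_snd.comp measurable_fst))
          have h2 : StronglyMeasurable (fun z : (ℝ × ℝ) × ℝ => p' i z.2) :=
            (hp'c i).stronglyMeasurable.comp_measurable measurable_snd
          exact (isBoundedBilinearMap_comp (𝕜 := ℝ) (E := X) (F := X)
            (G := X)).continuous.comp_stronglyMeasurable (h2.prodMk h1)
        simp only [Set.indicator_apply]
        exact StronglyMeasurable.ite hs hinner stronglyMeasurable_const
      have key : (fun rs : ℝ × ℝ => ∫ u in Ioc rs.2 (min rs.1 γ),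
            ∑ i, (p' i u).comp (pic p' τ' γ k (τ' i u) rs.2)) =
          fun rs : ℝ × ℝ => ∫ u, (Ioc rs.2 (min rs.1 γ)).indicator
            (fun u => ∑ i, (p' i u).comp (pic p' τ' γ k (τ' i u) rs.2)) u := by
        funext rs
        rw [integral_indicator measurableSet_Ioc]
      rw [key]
      exact hF.integral_prod_right'
  have picsec : ∀ (k : ℕ) (s : ℝ), StronglyMeasurable
      (fun u => ∑ i, (p' i u).comp (pic p' τ' γ k (τ' i u) s)) := by
    intro k s
    refine sm_finset_sum Finset.univ fun i => ?_
    have h1 : StronglyMeasurable (fun u => pic p' τ' γ k (τ' i u) s) :=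
      (picm k).comp_measurable ((hτ'c i).measurable.prodMk measurable_const)
    exact (isBoundedBilinearMap_comp (𝕜 := ℝ) (E := X) (F := X)
      (G := X)).continuous.comp_stronglyMeasurable ((hp'c i).stronglyMeasurable.prodMk h1)
  have picb : ∀ k, ∃ ck, 0 ≤ ck ∧ ∀ s, β ≤ s → ∀ r, ‖pic p' τ' γ k r s‖ ≤ ck := by
    intro k
    induction k with
    | zero =>
      refine ⟨1, zero_le_one, fun s hs r => ?_⟩
      by_cases h : s ≤ r
      · simp only [pic, if_pos h]
        exact ContinuousLinearMap.norm_id_le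
      · simp [pic, h]
    | succ k ih =>
      obtain ⟨ck, hck0, hck⟩ := ih
      have hγβ0 : (0:ℝ) ≤ γ - β := by linarith
      refine ⟨1 + K * (γ - β) * ck, by positivity, fun s hs r => ?_⟩
      by_cases h : s ≤ r
      · simp only [pic, if_pos h]
        refine (norm_add_le _ _).trans ?_
        have h1 : ‖∫ u in Ioc s (min r γ), ∑ i, (p' i u).comp (pic p' τ' γ k (τ' i u) s)‖
            ≤ (K * ck) * (volume (Ioc s (min r γ))).toReal := by
          refine norm_setIntegral_le_of_norm_le_const measure_Ioc_lt_top (fun u hu => ?_)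
          calc ‖∑ i, (p' i u).comp (pic p' τ' γ k (τ' i u) s)‖ ≤ ∑ i, C i * ck := by
                refine (norm_sum_le _ _).trans (Finset.sum_le_sum fun i _ => ?_)
                exact ((p' i u).opNorm_comp_le _).trans
                  (mul_le_mul (hp'b i u) (hck s hs _) (norm_nonneg _) (hC0 i))
          _ = K * ck := by rw [hKdef, Finset.sum_mul]
        have h2 : (volume (Ioc s (min r γ))).toReal ≤ γ - β := by
          rw [Real.volume_Ioc, ENNReal.toReal_ofReal']
          exact max_le (by linarith [min_le_right r γ]) hγβ0
        have h3 : ‖∫ u in Ioc s (min r γ), ∑ i, (p' i u).comp (pic p' τ' γ k (τ' i u) s)‖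
            ≤ K * (γ - β) * ck := by
          refine h1.trans ?_
          nlinarith [mul_nonneg hK0 hck0]
        have h4 : ‖(ContinuousLinearMap.id ℝ X : X →L[ℝ] X)‖ ≤ 1 :=
          ContinuousLinearMap.norm_id_le
        linarith
      · simp only [pic, if_neg h, norm_zero]
        positivity
  have picest : ∀ k, ∀ ζ ∈ Icc β γ, ∀ r ∈ Icc ζ γ,
      ‖pic p' τ' γ k r ζ - XX r ζ‖ ≤ (1 + M) * (K * (r - ζ)) ^ k / k.factorial := by
    intro k
    induction k with
    | zero =>
      intro ζ hζ r hr
      have h1 := hXXM ζ hζ r ⟨hαβ.trans (hζ.1.trans hr.1), hr.2⟩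
      have h2 : ‖(ContinuousLinearMap.id ℝ X : X →L[ℝ] X)‖ ≤ 1 :=
        ContinuousLinearMap.norm_id_le
      simp only [pic, if_pos hr.1, pow_zero, Nat.factorial_zero, Nat.cast_one, div_one, mul_one]
      exact (norm_sub_le _ _).trans (by linarith)
    | succ k ih =>
      intro ζ hζ r hr
      have hrβγ : r ∈ Icc β γ := ⟨hζ.1.trans hr.1, hr.2⟩
      have hminrγ : min r γ = r := min_eq_left hr.2
      have hpic : pic p' τ' γ (k+1) r ζ = ContinuousLinearMap.id ℝ X
          + ∫ u in Ioc ζ r, ∑ i, (p' i u).comp (pic p' τ' γ k (τ' i u) ζ) := by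
        simp only [pic, if_pos hr.1, hminrγ]
      have hXXeq := step2 ζ hζ r hr
      obtain ⟨ck, hck0, hck⟩ := picb k
      have hintF1 : IntegrableOn (fun u => ∑ i, (p' i u).comp (pic p' τ' γ k (τ' i u) ζ))
          (Ioc ζ r) volume := by
        haveI : IsFiniteMeasure (volume.restrict (Ioc ζ r)) :=
          ⟨by rw [Measure.restrict_apply_univ]; exact measure_Ioc_lt_top⟩
        refine Integrable.mono' (integrable_const (K * ck))
          (picsec k ζ).aestronglyMeasurable (ae_of_all _ fun u => ?_)
        calc ‖∑ i, (p' i u).comp (pic p' τ' γ k (τ' i u) ζ)‖ ≤ ∑ i, C i * ck := by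
              refine (norm_sum_le _ _).trans (Finset.sum_le_sum fun i _ => ?_)
              exact ((p' i u).opNorm_comp_le _).trans
                (mul_le_mul (hp'b i u) (hck ζ hζ.1 _) (norm_nonneg _) (hC0 i))
        _ = K * ck := by rw [hKdef, Finset.sum_mul]
      have hintF2 : IntegrableOn (fun u => ∑ i, (p i u).comp (XX (τ i u) ζ)) (Ioc ζ r) volume :=
        ((intervalIntegrable_iff_integrableOn_Ioc_of_le hζ.2).1 (int2 ζ hζ)).mono_set
          (Ioc_subset_Ioc le_rfl hr.2)
      rw [hpic, hXXeq, intervalIntegral.integral_of_le hr.1, add_sub_add_left_eq_sub,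
        ← integral_sub hintF1 hintF2]
      have hpt : ∀ u ∈ Ioc ζ r,
          ‖(∑ i, (p' i u).comp (pic p' τ' γ k (τ' i u) ζ)) - ∑ i, (p i u).comp (XX (τ i u) ζ)‖
          ≤ K * ((1 + M) * (K * (u - ζ)) ^ k / k.factorial) := by
        intro u hu
        have hubg : u ∈ Icc β γ := ⟨hζ.1.trans hu.1.le, hu.2.trans hr.2⟩
        have heq : (∑ i, (p' i u).comp (pic p' τ' γ k (τ' i u) ζ))
              - ∑ i, (p i u).comp (XX (τ i u) ζ)
            = ∑ i, (p i u).comp (pic p' τ' γ k (τ' i u) ζ - XX (τ i u) ζ) := by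
          rw [← Finset.sum_sub_distrib]
          refine Finset.sum_congr rfl fun i _ => ?_
          rw [hp'eq i u hubg, ContinuousLinearMap.comp_sub]
        rw [heq]
        have hKu0 : 0 ≤ K * (u - ζ) := mul_nonneg hK0 (by linarith [hu.1.le])
        have hD0 : 0 ≤ (1 + M) * (K * (u - ζ)) ^ k / k.factorial := by positivity
        refine hsum_comp u hubg _ _ hD0 fun i => ?_
        rw [hτ'eq i u hubg]
        rcases lt_or_ge (τ i u) ζ with hτζ | hτζ
        · rw [pic_of_lt p' τ' γ k hτζ, hXX0 ζ hζ _ ⟨(hτ i u hubg).1, hτζ⟩, sub_zero, norm_zero]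
          exact hD0
        · have hτmem : τ i u ∈ Icc ζ γ := ⟨hτζ, (hτ i u hubg).2.trans hubg.2⟩
          refine (ih ζ hζ (τ i u) hτmem).trans ?_
          have hle : K * (τ i u - ζ) ≤ K * (u - ζ) :=
            mul_le_mul_of_nonneg_left (by linarith [(hτ i u hubg).2]) hK0
          have h0 : 0 ≤ K * (τ i u - ζ) := mul_nonneg hK0 (by linarith)
          gcongr <;> first | exact h0 | exact hle | positivity
      have hgint : IntegrableOn (fun u => K * ((1 + M) * (K * (u - ζ)) ^ k / k.factorial))
          (Ioc ζ r) volume := (Continuous.integrableOn_Ioc (by fun_prop))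
      calc ‖∫ u in Ioc ζ r, ((∑ i, (p' i u).comp (pic p' τ' γ k (τ' i u) ζ))
              - ∑ i, (p i u).comp (XX (τ i u) ζ))‖
          ≤ ∫ u in Ioc ζ r, ‖(∑ i, (p' i u).comp (pic p' τ' γ k (τ' i u) ζ))
              - ∑ i, (p i u).comp (XX (τ i u) ζ)‖ := norm_integral_le_integral_norm _
        _ ≤ ∫ u in Ioc ζ r, K * ((1 + M) * (K * (u - ζ)) ^ k / k.factorial) :=
            setIntegral_mono_on (hintF1.sub hintF2).norm hgint measurableSet_Ioc hpt
        _ = (1 + M) * (K * (r - ζ)) ^ (k+1) / (k+1).factorial := by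
            rw [← intervalIntegral.integral_of_le hr.1]
            have hrw : ∀ u : ℝ, K * ((1 + M) * (K * (u - ζ)) ^ k / k.factorial)
                = (K ^ (k+1) * (1 + M) / k.factorial) * (u - ζ) ^ k := by
              intro u; rw [mul_pow]; ring
            simp_rw [hrw]
            rw [intervalIntegral.integral_const_mul,
              intervalIntegral.integral_comp_sub_right (fun y => y ^ k) ζ, integral_pow,
              sub_self]
            have hfac : ((k+1).factorial : ℝ) = (k+1) * k.factorial := by
              push_cast [Nat.factorial_succ]; ring
            rw [mul_pow, hfac]
            have hk1 : ((k:ℝ) + 1) ≠ 0 := by positivity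
            have hkf : (k.factorial : ℝ) ≠ 0 := by positivity
            field_simp
            ring
  -- jointly measurable version of XX
  set HH : ℝ × ℝ → X →L[ℝ] X :=
    fun rs => if rs.1 ∈ Icc α γ ∧ rs.2 ∈ Icc β γ then XX rs.1 rs.2 else 0 with hHHdef
  have HHeq : ∀ r ∈ Icc α γ, ∀ s ∈ Icc β γ, HH (r, s) = XX r s := by
    intro r hr s hs; simp [hHHdef, mem_Icc, hr.1, hr.2, hs.1, hs.2]
  have HHb : ∀ rs, ‖HH rs‖ ≤ M := by
    intro rs
    rw [hHHdef]
    dsimp only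
    split_ifs with h
    · exact hXXM rs.2 h.2 rs.1 h.1
    · simpa using hM0.le
  have HHm : StronglyMeasurable HH := by
    have hset : MeasurableSet {rs : ℝ × ℝ | rs.1 ∈ Icc α γ ∧ rs.2 ∈ Icc β γ} :=
      (measurable_fst measurableSet_Icc).inter (measurable_snd measurableSet_Icc)
    refine stronglyMeasurable_of_tendsto (atTop : Filter ℕ)
      (f := fun k (rs : ℝ × ℝ) => if rs.1 ∈ Icc α γ ∧ rs.2 ∈ Icc β γ
        then pic p' τ' γ k rs.1 rs.2 else 0)
      (fun k => StronglyMeasurable.ite hset (picm k) stronglyMeasurable_const) ?_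
    rw [tendsto_pi_nhds]
    intro rs
    by_cases h : rs.1 ∈ Icc α γ ∧ rs.2 ∈ Icc β γ
    · simp only [if_pos h, hHHdef]
      rcases lt_or_ge rs.1 rs.2 with hlt | hle
      · have h0 : XX rs.1 rs.2 = 0 := hXX0 rs.2 h.2 rs.1 ⟨h.1.1, hlt⟩
        simp [pic_of_lt p' τ' γ _ hlt, h0, tendsto_const_nhds]
      · have hest := fun k => picest k rs.2 h.2 rs.1 ⟨hle, h.1.2⟩
        have htend0 : Tendsto (fun k : ℕ =>
            (1 + M) * (K * (rs.1 - rs.2)) ^ k / k.factorial) atTop (nhds 0) := by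
          simpa [mul_div_assoc] using (FloorSemiring.tendsto_pow_div_factorial_atTop
            (K := ℝ) (K * (rs.1 - rs.2))).const_mul (1 + M)
        have hten := squeeze_zero_norm hest htend0
        exact tendsto_sub_nhds_zero_iff.mp hten
    · simp only [if_neg h, hHHdef]
      exact tendsto_const_nhds
  -- the inhomogeneity v (including the history term)
  obtain ⟨v, hvm, hveq, Cv, hCv0, hvb⟩ :
      ∃ v : ℝ → X, StronglyMeasurable v ∧
        (∀ s ∈ Icc β γ, v s = q s +
          ∑ i, (if α ≤ τ i s ∧ τ i s < β then p i s (φ (τ i s)) else 0)) ∧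
        ∃ Cv, 0 ≤ Cv ∧ ∀ s, ‖v s‖ ≤ Cv := by
    refine ⟨fun s => q' s + ∑ i, (if τ' i s < β then (p' i s) (φ' (τ' i s)) else 0), ?_, ?_, ?_⟩
    · refine hq'c.stronglyMeasurable.add (sm_finset_sum Finset.univ fun i => ?_)
      refine StronglyMeasurable.ite (measurableSet_lt (hτ'c i).measurable measurable_const)
        ?_ stronglyMeasurable_const
      have : Continuous (fun s => (p' i s) (φ' (τ' i s))) := by
        have := (hp'c i).clm_apply (hφ'c.comp (hτ'c i))
        exact this
      exact this.stronglyMeasurable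
    · intro s hs
      beta_reduce
      rw [hq'eq s hs]
      congr 1
      refine Finset.sum_congr rfl fun i _ => ?_
      rw [hτ'eq i s hs, hp'eq i s hs]
      rcases lt_or_ge (τ i s) β with hlt | hle
      · rw [if_pos hlt, if_pos ⟨(hτ i s hs).1, hlt⟩,
          hφ'eq (τ i s) ⟨(hτ i s hs).1, hlt.le⟩]
      · rw [if_neg (not_lt.2 hle), if_neg (by push_neg; exact fun _ => hle)]
    · refine ⟨Cq + K * Cφ, by positivity, fun s => ?_⟩
      refine (norm_add_le _ _).trans (add_le_add (hq'b s) ?_)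
      calc ‖∑ i, (if τ' i s < β then (p' i s) (φ' (τ' i s)) else 0)‖
          ≤ ∑ i, C i * Cφ := by
            refine (norm_sum_le _ _).trans (Finset.sum_le_sum fun i _ => ?_)
            split_ifs with h
            · exact ((p' i s).le_opNorm _).trans
                (mul_le_mul (hp'b i s) (hφ'b _) (norm_nonneg _) (hC0 i))
            · simp [mul_nonneg (hC0 i) hCφ0]
      _ = K * Cφ := by rw [hKdef, Finset.sum_mul]
  -- measurability and integrability in the second variable
  have haesX : ∀ r₀ ∈ Icc α γ, ∀ w : ℝ → X, StronglyMeasurable w →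
      AEStronglyMeasurable (fun s => XX r₀ s (w s)) (volume.restrict (Ioc β γ)) := by
    intro r₀ hr₀ w hw
    have h1 : StronglyMeasurable (fun s => HH (r₀, s)) :=
      HHm.comp_measurable measurable_prodMk_left
    have hsm : StronglyMeasurable (fun s => HH (r₀, s) (w s)) :=
      (isBoundedBilinearMap_apply (𝕜 := ℝ) (E := X)
        (F := X)).continuous.comp_stronglyMeasurable (h1.prodMk hw)
    refine hsm.aestronglyMeasurable.congr ?_
    filter_upwards [ae_restrict_mem measurableSet_Ioc] with s hs
    rw [HHeq r₀ hr₀ s ⟨hs.1.le, hs.2⟩]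
  have hintX : ∀ r₀ ∈ Icc α γ, ∀ w : ℝ → X, StronglyMeasurable w → ∀ Cw : ℝ, (∀ s, ‖w s‖ ≤ Cw) →
      IntegrableOn (fun s => XX r₀ s (w s)) (Ioc β γ) volume := by
    intro r₀ hr₀ w hw Cw hCw
    haveI : IsFiniteMeasure (volume.restrict (Ioc β γ)) :=
      ⟨by rw [Measure.restrict_apply_univ]; exact measure_Ioc_lt_top⟩
    refine Integrable.mono' (integrable_const (M * Cw)) (haesX r₀ hr₀ w hw) ?_
    filter_upwards [ae_restrict_mem measurableSet_Ioc] with s hs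
    calc ‖XX r₀ s (w s)‖ ≤ ‖XX r₀ s‖ * ‖w s‖ := (XX r₀ s).le_opNorm _
    _ ≤ M * Cw := mul_le_mul (hXXM s ⟨hs.1.le, hs.2⟩ r₀ hr₀) (hCw s) (norm_nonneg _) hM0.le
  have hsubI : ∀ a b : ℝ, a ∈ Icc β γ → b ∈ Icc β γ → Set.uIoc a b ⊆ Ioc β γ := by
    intro a b ha hb
    rw [Set.uIoc]
    exact Ioc_subset_Ioc (le_inf ha.1 hb.1) (sup_le ha.2 hb.2)
  have hintXI : ∀ r₀ ∈ Icc α γ, ∀ w : ℝ → X, StronglyMeasurable w → ∀ Cw : ℝ,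
      (∀ s, ‖w s‖ ≤ Cw) → ∀ a b : ℝ, a ∈ Icc β γ → b ∈ Icc β γ →
      IntervalIntegrable (fun s => XX r₀ s (w s)) volume a b := by
    intro r₀ hr₀ w hw Cw hCw a b ha hb
    rw [intervalIntegrable_iff]
    exact (hintX r₀ hr₀ w hw Cw hCw).mono_set (hsubI a b ha hb)
  -- FTC for x
  have step1 : ∀ r ∈ Icc β γ, x r = φ β + ∫ u in β..r, (∑ i, p i u (x (τ i u)) + q u) := by
    intro r hr
    have hcont2 : ContinuousOn (fun u => ∑ i, p i u (x (τ i u)) + q u) (Icc β γ) := by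
      refine ContinuousOn.add (continuousOn_finset_sum _ fun i _ => ?_) hq
      exact (hp i).clm_apply (hxc.comp (hτc i)
        (fun u hu => ⟨(hτ i u hu).1, (hτ i u hu).2.trans hu.2⟩))
    have hxβ : x β = φ β := hxφ β ⟨hαβ, le_rfl⟩
    have hFTC := intervalIntegral.integral_eq_sub_of_hasDeriv_right_of_le hr.1
      (f := x) (hxc.mono (Icc_subset_Icc hαβ hr.2)) ?_
      ((hcont2.mono (by rw [Set.uIcc_of_le hr.1]; exact Icc_subset_Icc le_rfl hr.2 :
        Set.uIcc β r ⊆ Icc β γ)).intervalIntegrable)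
    · rw [hFTC, hxβ]; abel
    · intro u hu
      refine (hx u ⟨hu.1.le, hu.2.le.trans hr.2⟩).mono_of_mem_nhdsWithin ?_
      have h1 : Ioi u ∩ Iic γ ∈ nhdsWithin u (Ioi u) :=
        Filter.inter_mem self_mem_nhdsWithin
          (mem_nhdsWithin_of_mem_nhds (Iic_mem_nhds (lt_of_lt_of_le hu.2 hr.2)))
      exact Filter.mem_of_superset h1 (fun y hy => ⟨hu.1.le.trans hy.1.le, hy.2⟩)
  haveI hfinBG : IsFiniteMeasure (volume.restrict (Ioc β γ)) :=
    ⟨by rw [Measure.restrict_apply_univ]; exact measure_Ioc_lt_top⟩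
  have hββγ : β ∈ Icc β γ := ⟨le_rfl, hβγ'⟩
  -- the joint kernel
  set Φ2 : ℝ → ℝ → X := fun u s => ∑ i, (p' i u) (HH (τ' i u, s) (v s)) with hΦ2def
  have hΦ2m : StronglyMeasurable (fun us : ℝ × ℝ => Φ2 us.1 us.2) := by
    refine sm_finset_sum Finset.univ fun i => ?_
    have hH1 : StronglyMeasurable (fun us : ℝ × ℝ => HH (τ' i us.1, us.2)) :=
      HHm.comp_measurable (((hτ'c i).measurable.comp measurable_fst).prodMk measurable_snd)
    have happ1 : StronglyMeasurable (fun us : ℝ × ℝ => HH (τ' i us.1, us.2) (v us.2)) :=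
      (isBoundedBilinearMap_apply (𝕜 := ℝ) (E := X)
        (F := X)).continuous.comp_stronglyMeasurable
        (hH1.prodMk (hvm.comp_measurable measurable_snd))
    have hp2 : StronglyMeasurable (fun us : ℝ × ℝ => p' i us.1) :=
      (hp'c i).stronglyMeasurable.comp_measurable measurable_fst
    exact (isBoundedBilinearMap_apply (𝕜 := ℝ) (E := X)
      (F := X)).continuous.comp_stronglyMeasurable (hp2.prodMk happ1)
  have hΦ2b : ∀ u s, ‖Φ2 u s‖ ≤ K * (M * Cv) := by
    intro u s
    calc ‖Φ2 u s‖ ≤ ∑ i, C i * (M * Cv) := by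
          refine (norm_sum_le _ _).trans (Finset.sum_le_sum fun i _ => ?_)
          refine ((p' i u).le_opNorm _).trans ?_
          refine mul_le_mul (hp'b i u) ?_ (norm_nonneg _) (hC0 i)
          calc ‖HH (τ' i u, s) (v s)‖ ≤ ‖HH (τ' i u, s)‖ * ‖v s‖ :=
                (HH (τ' i u, s)).le_opNorm _
          _ ≤ M * Cv := mul_le_mul (HHb _) (hvb s) (norm_nonneg _) hM0.le
    _ = K * (M * Cv) := by rw [hKdef, Finset.sum_mul]
  have hΦ2eq : ∀ u ∈ Icc β γ, ∀ s ∈ Icc β γ, Φ2 u s = ∑ i, p i u (XX (τ i u) s (v s)) := by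
    intro u hu s hs
    refine Finset.sum_congr rfl fun i _ => ?_
    rw [hp'eq i u hu, hτ'eq i u hu,
      HHeq (τ i u) ⟨(hτ i u hu).1, (hτ i u hu).2.trans hu.2⟩ s hs]
  have hfm : StronglyMeasurable (fun su : ℝ × ℝ => if su.1 < su.2 then Φ2 su.2 su.1 else 0) := by
    refine StronglyMeasurable.ite (measurableSet_lt measurable_fst measurable_snd) ?_
      stronglyMeasurable_const
    exact hΦ2m.comp_measurable measurable_swap
  -- evaluation of the inner integral
  have hIocΦ : ∀ u ∈ Icc β γ, ∫ s in Ioc β u, Φ2 u s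
      = ∑ i, p i u (∫ s in β..u, XX (τ i u) s (v s)) := by
    intro u hu
    have hτm : ∀ i : Fin n, τ i u ∈ Icc α γ :=
      fun i => ⟨(hτ i u hu).1, (hτ i u hu).2.trans hu.2⟩
    have h3 : ∀ s ∈ Ioc β u, Φ2 u s = ∑ i, p i u (XX (τ i u) s (v s)) :=
      fun s hs => hΦ2eq u hu s ⟨hs.1.le, hs.2.trans hu.2⟩
    rw [setIntegral_congr_fun measurableSet_Ioc h3]
    have hFint : ∀ i : Fin n, Integrable (fun s => XX (τ i u) s (v s))
        (volume.restrict (Ioc β u)) :=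
      fun i => (hintX (τ i u) (hτm i) v hvm Cv hvb).mono_set (Ioc_subset_Ioc_right hu.2)
    rw [integral_finset_sum _ (fun i _ => (p i u).integrable_comp (hFint i))]
    refine Finset.sum_congr rfl fun i _ => ?_
    rw [(p i u).integral_comp_comm (hFint i), intervalIntegral.integral_of_le hu.1]
  have hinnerb : ∀ (i : Fin n), ∀ u ∈ Icc β γ,
      ‖∫ s in β..u, XX (τ i u) s (v s)‖ ≤ M * Cv * (γ - β) := by
    intro i u hu
    have hτm : τ i u ∈ Icc α γ := ⟨(hτ i u hu).1, (hτ i u hu).2.trans hu.2⟩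
    have h1 : ∀ s ∈ Set.uIoc β u, ‖XX (τ i u) s (v s)‖ ≤ M * Cv := by
      intro s hs
      rw [Set.uIoc_of_le hu.1] at hs
      calc ‖XX (τ i u) s (v s)‖ ≤ ‖XX (τ i u) s‖ * ‖v s‖ := (XX (τ i u) s).le_opNorm _
      _ ≤ M * Cv := mul_le_mul (hXXM s ⟨hs.1.le, hs.2.trans hu.2⟩ (τ i u) hτm) (hvb s)
          (norm_nonneg _) hM0.le
    refine (intervalIntegral.norm_integral_le_of_norm_le_const h1).trans ?_
    rw [abs_of_nonneg (by linarith [hu.1] : (0:ℝ) ≤ u - β)]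
    have : u - β ≤ γ - β := by linarith [hu.2]
    exact mul_le_mul_of_nonneg_left this (by positivity)
  -- integrability of the pieces in the u variable
  have hDm : StronglyMeasurable (fun u => ∫ s in Ioc β γ, (if s ≤ u then Φ2 u s else 0)) := by
    have h1 : StronglyMeasurable (fun us : ℝ × ℝ => if us.2 ≤ us.1 then Φ2 us.1 us.2 else 0) :=
      StronglyMeasurable.ite (measurableSet_le measurable_snd measurable_fst) hΦ2m
        stronglyMeasurable_const
    exact h1.integral_prod_right'
  have hDrepr : ∀ u ∈ Icc β γ, (∫ s in Ioc β γ, (if s ≤ u then Φ2 u s else 0))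
      = ∑ i, p i u (∫ s in β..u, XX (τ i u) s (v s)) := by
    intro u hu
    have hind : (fun s => if s ≤ u then Φ2 u s else 0) = (Iic u).indicator (fun s => Φ2 u s) := by
      funext s; simp [Set.indicator_apply]
    rw [hind, integral_indicator measurableSet_Iic,
      Measure.restrict_restrict measurableSet_Iic]
    have h2 : Iic u ∩ Ioc β γ = Ioc β u := by
      rw [Set.inter_comm, Set.Ioc_inter_Iic, min_eq_right hu.2]
    rw [h2]
    exact hIocΦ u hu
  have intD : IntegrableOn (fun u => ∑ i, p i u (∫ s in β..u, XX (τ i u) s (v s)))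
      (Ioc β γ) volume := by
    refine Integrable.mono' (integrable_const (K * (M * Cv * (γ - β)))) ?_ ?_
    · refine hDm.aestronglyMeasurable.congr ?_
      filter_upwards [ae_restrict_mem measurableSet_Ioc] with u hu
      exact hDrepr u ⟨hu.1.le, hu.2⟩
    · filter_upwards [ae_restrict_mem measurableSet_Ioc] with u hu
      exact hsum_app u ⟨hu.1.le, hu.2⟩ _ _ (mul_nonneg (mul_nonneg hM0.le hCv0) hγβ0)
        (fun i => hinnerb i u ⟨hu.1.le, hu.2⟩)
  have intB : IntegrableOn (fun u => ∑ i, p i u (XX (τ i u) β (φ β))) (Ioc β γ) volume := by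
    have hsm : StronglyMeasurable (fun u => ∑ i, (p' i u) (HH (τ' i u, β) (φ β))) := by
      refine sm_finset_sum Finset.univ fun i => ?_
      have h1 : StronglyMeasurable (fun u => HH (τ' i u, β)) :=
        HHm.comp_measurable ((hτ'c i).measurable.prodMk measurable_const)
      have h2 : StronglyMeasurable (fun u => HH (τ' i u, β) (φ β)) :=
        (isBoundedBilinearMap_apply (𝕜 := ℝ) (E := X)
          (F := X)).continuous.comp_stronglyMeasurable (h1.prodMk stronglyMeasurable_const)
      exact (isBoundedBilinearMap_apply (𝕜 := ℝ) (E := X)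
        (F := X)).continuous.comp_stronglyMeasurable
        ((hp'c i).stronglyMeasurable.prodMk h2)
    refine Integrable.mono' (integrable_const (K * (M * ‖φ β‖))) ?_ ?_
    · refine hsm.aestronglyMeasurable.congr ?_
      filter_upwards [ae_restrict_mem measurableSet_Ioc] with u hu
      have hu' : u ∈ Icc β γ := ⟨hu.1.le, hu.2⟩
      refine Finset.sum_congr rfl fun i _ => ?_
      rw [hp'eq i u hu', hτ'eq i u hu',
        HHeq (τ i u) ⟨(hτ i u hu').1, (hτ i u hu').2.trans hu'.2⟩ β hββγ]
    · filter_upwards [ae_restrict_mem measurableSet_Ioc] with u hu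
      have hu' : u ∈ Icc β γ := ⟨hu.1.le, hu.2⟩
      refine hsum_app u hu' _ _ (by positivity) (fun i => ?_)
      calc ‖XX (τ i u) β (φ β)‖ ≤ ‖XX (τ i u) β‖ * ‖φ β‖ := (XX (τ i u) β).le_opNorm _
      _ ≤ M * ‖φ β‖ := mul_le_mul_of_nonneg_right
          (hXXM β hββγ (τ i u) ⟨(hτ i u hu').1, (hτ i u hu').2.trans hu'.2⟩) (norm_nonneg _)
  have intv : IntegrableOn v (Ioc β γ) volume :=
    Integrable.mono' (integrable_const Cv) hvm.aestronglyMeasurable (ae_of_all _ hvb)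
  -- expansion of the first term of Y
  have ha2 : ∀ r ∈ Icc β γ, XX r β (φ β)
      = φ β + ∫ u in β..r, ∑ i, p i u (XX (τ i u) β (φ β)) := by
    intro r hr
    have hint' : IntervalIntegrable (fun u => ∑ i, (p i u).comp (XX (τ i u) β)) volume β r :=
      (int2 β hββγ).mono_set
        (by rw [Set.uIcc_of_le hr.1, Set.uIcc_of_le hβγ']; exact Icc_subset_Icc le_rfl hr.2)
    rw [step2 β hββγ r hr, ContinuousLinearMap.add_apply, ContinuousLinearMap.id_apply,
      ContinuousLinearMap.intervalIntegral_apply hint' (φ β)]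
    congr 1
    refine intervalIntegral.integral_congr fun u _ => ?_
    simp
  -- the Fubini step
  have hb3 : ∀ r ∈ Icc β γ, (∫ s in β..r, XX r s (v s)) =
      (∫ s in β..r, v s) + ∫ u in β..r, ∑ i, p i u (∫ s in β..u, XX (τ i u) s (v s)) := by
    intro r hr
    haveI : IsFiniteMeasure (volume.restrict (Ioc β r)) :=
      ⟨by rw [Measure.restrict_apply_univ]; exact measure_Ioc_lt_top⟩
    have hrαγ : r ∈ Icc α γ := ⟨hαβ.trans hr.1, hr.2⟩
    -- pointwise expansion in s
    have hpt : ∀ s ∈ Ioc β r, XX r s (v s)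
        = v s + ∫ u in Ioc β r, (if s < u then Φ2 u s else 0) := by
      intro s hs
      have hsmem : s ∈ Icc β γ := ⟨hs.1.le, hs.2.trans hr.2⟩
      have hrs : r ∈ Icc s γ := ⟨hs.2, hr.2⟩
      have hint' : IntervalIntegrable (fun u => ∑ i, (p i u).comp (XX (τ i u) s)) volume s r :=
        (int2 s hsmem).mono_set
          (by rw [Set.uIcc_of_le hs.2, Set.uIcc_of_le hsmem.2]; exact Icc_subset_Icc le_rfl hr.2)
      have happ : XX r s (v s)
          = v s + ∫ u in s..r, (∑ i, (p i u).comp (XX (τ i u) s)) (v s) := by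
        rw [step2 s hsmem r hrs, ContinuousLinearMap.add_apply, ContinuousLinearMap.id_apply,
          ContinuousLinearMap.intervalIntegral_apply hint' (v s)]
      have hind : (fun u => if s < u then Φ2 u s else 0)
          = (Ioi s).indicator (fun u => Φ2 u s) := by
        funext u; simp [Set.indicator_apply]
      have hset : Ioi s ∩ Ioc β r = Ioc s r := by
        rw [Set.inter_comm, Set.Ioc_inter_Ioi, sup_eq_right.2 hs.1.le]
      have hRHS : (∫ u in Ioc β r, (if s < u then Φ2 u s else 0)) = ∫ u in Ioc s r, Φ2 u s := by
        rw [hind, integral_indicator measurableSet_Ioi,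
          Measure.restrict_restrict measurableSet_Ioi, hset]
      rw [happ, hRHS, intervalIntegral.integral_of_le hs.2]
      congr 1
      refine setIntegral_congr_fun measurableSet_Ioc (fun u hu => ?_)
      have humem : u ∈ Icc β γ := ⟨hs.1.le.trans hu.1.le, hu.2.trans hr.2⟩
      rw [hΦ2eq u humem s hsmem]
      simp
    -- integrability of the inner integral as a function of s
    have hIint : IntegrableOn (fun s => ∫ u in Ioc β r, (if s < u then Φ2 u s else 0))
        (Ioc β r) volume := by
      refine Integrable.mono' (integrable_const ((K * (M * Cv)) * (γ - β))) ?_ ?_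
      · have h1 : StronglyMeasurable (fun su : ℝ × ℝ =>
            if su.1 < su.2 then Φ2 su.2 su.1 else 0) := hfm
        exact (h1.integral_prod_right').aestronglyMeasurable
      · refine ae_of_all _ fun s => ?_
        refine (norm_setIntegral_le_of_norm_le_const (C := K * (M * Cv))
          measure_Ioc_lt_top (fun u _ => ?_)).trans ?_
        · show ‖if s < u then Φ2 u s else 0‖ ≤ K * (M * Cv)
          split_ifs with h
          · exact hΦ2b u s
          · simp [mul_nonneg (mul_nonneg hK0 hM0.le) hCv0,
              mul_nonneg hK0 (mul_nonneg hM0.le hCv0)]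
        · refine mul_le_mul_of_nonneg_left ?_ (mul_nonneg hK0 (mul_nonneg hM0.le hCv0))
          rw [Real.volume_real_Ioc]
          exact max_le (by linarith [hr.1, hr.2]) hγβ0
    have intv' : IntegrableOn v (Ioc β r) volume := intv.mono_set (Ioc_subset_Ioc_right hr.2)
    -- Fubini swap
    have hswap : (∫ s in Ioc β r, ∫ u in Ioc β r, (if s < u then Φ2 u s else 0))
        = ∫ u in Ioc β r, ∫ s in Ioc β r, (if s < u then Φ2 u s else 0) := by
      apply integral_integral_swap (f := fun s u => if s < u then Φ2 u s else 0)
      refine Integrable.mono' (integrable_const (K * (M * Cv)))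
        hfm.aestronglyMeasurable (ae_of_all _ fun su => ?_)
      show ‖if su.1 < su.2 then Φ2 su.2 su.1 else 0‖ ≤ K * (M * Cv)
      split_ifs with h
      · exact hΦ2b _ _
      · simp [mul_nonneg hK0 (mul_nonneg hM0.le hCv0)]
    -- inner evaluation after the swap
    have hinner2 : ∀ u ∈ Ioc β r, (∫ s in Ioc β r, (if s < u then Φ2 u s else 0))
        = ∑ i, p i u (∫ s in β..u, XX (τ i u) s (v s)) := by
      intro u hu
      have humem : u ∈ Icc β γ := ⟨hu.1.le, hu.2.trans hr.2⟩
      have hind : (fun s => if s < u then Φ2 u s else 0)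
          = (Iio u).indicator (fun s => Φ2 u s) := by
        funext s; simp [Set.indicator_apply]
      have hset : Iio u ∩ Ioc β r = Ioo β u := by
        ext s
        simp only [mem_inter_iff, mem_Iio, mem_Ioc, mem_Ioo]
        constructor
        · rintro ⟨h1, h2, h3⟩; exact ⟨h2, h1⟩
        · rintro ⟨h1, h2⟩; exact ⟨h2, h1, (le_of_lt h2).trans hu.2⟩
      rw [hind, integral_indicator measurableSet_Iio,
        Measure.restrict_restrict measurableSet_Iio, hset, ← integral_Ioc_eq_integral_Ioo]
      exact hIocΦ u humem
    -- assemble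
    rw [intervalIntegral.integral_of_le hr.1, setIntegral_congr_fun measurableSet_Ioc hpt,
      integral_add intv' hIint, hswap]
    congr 1
    · rw [intervalIntegral.integral_of_le hr.1]
    · rw [intervalIntegral.integral_of_le hr.1]
      exact setIntegral_congr_fun measurableSet_Ioc hinner2
  -- the candidate solution and the error term
  set Y : ℝ → X := fun r => XX r β (φ β) + ∫ s in β..r, XX r s (v s) with hYdef
  set Ψ : ℝ → X := fun u => ((∑ i, p i u (x (τ i u)) + q u) - v u)
    - ∑ i, p i u (XX (τ i u) β (φ β) + ∫ s in β..u, XX (τ i u) s (v s)) with hΨdef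
  have hcontA : ContinuousOn (fun u => ∑ i, p i u (x (τ i u)) + q u) (Icc β γ) := by
    refine ContinuousOn.add (continuousOn_finset_sum _ fun i _ => ?_) hq
    exact (hp i).clm_apply (hxc.comp (hτc i)
      (fun u hu => ⟨(hτ i u hu).1, (hτ i u hu).2.trans hu.2⟩))
  have intA : IntegrableOn (fun u => ∑ i, p i u (x (τ i u)) + q u) (Ioc β γ) volume :=
    (hcontA.integrableOn_Icc).mono_set Ioc_subset_Icc_self
  have hBD : ∀ u, (∑ i, p i u (XX (τ i u) β (φ β) + ∫ s in β..u, XX (τ i u) s (v s)))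
      = (∑ i, p i u (XX (τ i u) β (φ β)))
        + ∑ i, p i u (∫ s in β..u, XX (τ i u) s (v s)) := by
    intro u
    rw [← Finset.sum_add_distrib]
    exact Finset.sum_congr rfl fun i _ => (p i u).map_add _ _
  have intBr : IntegrableOn (fun u => ∑ i, p i u (XX (τ i u) β (φ β)
      + ∫ s in β..u, XX (τ i u) s (v s))) (Ioc β γ) volume :=
    (intB.add intD).congr (ae_of_all _ fun u => (hBD u).symm)
  have intΨ : IntegrableOn Ψ (Ioc β γ) volume := (intA.sub intv).sub intBr
  have hsub : ∀ r ∈ Icc β γ, ∀ (f : ℝ → X), IntegrableOn f (Ioc β γ) volume →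
      IntervalIntegrable f volume β r := by
    intro r hr f hf
    rw [intervalIntegrable_iff_integrableOn_Ioc_of_le hr.1]
    exact hf.mono_set (Ioc_subset_Ioc_right hr.2)
  -- the error integral identity
  have hdag : ∀ r ∈ Icc β γ, x r - Y r = ∫ u in β..r, Ψ u := by
    intro r hr
    have h1 : (∫ u in β..r, Ψ u)
        = ((∫ u in β..r, (∑ i, p i u (x (τ i u)) + q u)) - ∫ u in β..r, v u)
          - ∫ u in β..r, (∑ i, p i u (XX (τ i u) β (φ β)
              + ∫ s in β..u, XX (τ i u) s (v s))) := by
      rw [hΨdef, intervalIntegral.integral_sub ((hsub r hr _ intA).sub (hsub r hr _ intv))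
        (hsub r hr _ intBr), intervalIntegral.integral_sub (hsub r hr _ intA) (hsub r hr _ intv)]
    have h2 : (∫ u in β..r, (∑ i, p i u (XX (τ i u) β (φ β)
          + ∫ s in β..u, XX (τ i u) s (v s))))
        = (∫ u in β..r, ∑ i, p i u (XX (τ i u) β (φ β)))
          + ∫ u in β..r, ∑ i, p i u (∫ s in β..u, XX (τ i u) s (v s)) := by
      rw [intervalIntegral.integral_congr (fun u _ => hBD u),
        intervalIntegral.integral_add (hsub r hr _ intB) (hsub r hr _ intD)]
    rw [h1, h2, step1 r hr]
    simp only [hYdef]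
    rw [ha2 r hr, hb3 r hr]
    abel
  -- pointwise identification of Ψ with the delayed error
  have hΨeq : ∀ u ∈ Icc β γ, Ψ u
      = ∑ i, p i u (if β ≤ τ i u then x (τ i u) - Y (τ i u) else 0) := by
    intro u hu
    have hterm : ∀ i : Fin n, p i u (x (τ i u))
        - (if α ≤ τ i u ∧ τ i u < β then p i u (φ (τ i u)) else 0)
        - p i u (XX (τ i u) β (φ β) + ∫ s in β..u, XX (τ i u) s (v s))
        = p i u (if β ≤ τ i u then x (τ i u) - Y (τ i u) else 0) := by
      intro i
      rcases lt_or_ge (τ i u) β with hτβ | hτβ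
      · have hταβ : τ i u ∈ Icc α β := ⟨(hτ i u hu).1, hτβ.le⟩
        have hxτ : x (τ i u) = φ (τ i u) := hxφ _ hταβ
        have hXX0' : XX (τ i u) β = 0 := hXX0 β hββγ _ ⟨hταβ.1, hτβ⟩
        have hint0 : (∫ s in β..u, XX (τ i u) s (v s)) = 0 := by
          rw [intervalIntegral.integral_of_le hu.1,
            setIntegral_congr_fun (g := fun _ => (0:X)) measurableSet_Ioc (fun s hs => ?_),
            integral_zero]
          rw [hXX0 s ⟨hs.1.le, hs.2.trans hu.2⟩ (τ i u) ⟨hταβ.1, lt_of_lt_of_le hτβ hs.1.le⟩]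
          simp
        rw [if_neg (not_le.2 hτβ), if_pos ⟨hταβ.1, hτβ⟩, hxτ, hXX0', hint0]
        simp
      · rw [if_pos hτβ, if_neg (by push_neg; exact fun _ => hτβ)]
        have hτmem : τ i u ∈ Icc β γ := ⟨hτβ, (hτ i u hu).2.trans hu.2⟩
        have hταγ : τ i u ∈ Icc α γ := ⟨hαβ.trans hτβ, hτmem.2⟩
        have hsplit : (∫ s in β..u, XX (τ i u) s (v s))
            = (∫ s in β..(τ i u), XX (τ i u) s (v s))
              + ∫ s in (τ i u)..u, XX (τ i u) s (v s) := by
          rw [intervalIntegral.integral_add_adjacent_intervals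
            (hintXI (τ i u) hταγ v hvm Cv hvb β (τ i u) hββγ hτmem)
            (hintXI (τ i u) hταγ v hvm Cv hvb (τ i u) u hτmem hu)]
        have hzero : (∫ s in (τ i u)..u, XX (τ i u) s (v s)) = 0 := by
          rw [intervalIntegral.integral_of_le (hτ i u hu).2,
            setIntegral_congr_fun (g := fun _ => (0:X)) measurableSet_Ioc (fun s hs => ?_),
            integral_zero]
          rw [hXX0 s ⟨hτβ.trans hs.1.le, hs.2.trans hu.2⟩ (τ i u) ⟨(hτ i u hu).1, hs.1⟩]
          simp
        have hYτ : Y (τ i u) = XX (τ i u) β (φ β) + ∫ s in β..(τ i u), XX (τ i u) s (v s) := by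
          simp only [hYdef]
        rw [hsplit, hzero, add_zero, (p i u).map_sub, hYτ, sub_zero]
    simp only [hΨdef]
    rw [hveq u hu]
    have hsum3 : (∑ i, p i u (x (τ i u)) + q u)
        - (q u + ∑ i, (if α ≤ τ i u ∧ τ i u < β then p i u (φ (τ i u)) else 0))
        - (∑ i, p i u (XX (τ i u) β (φ β) + ∫ s in β..u, XX (τ i u) s (v s)))
        = ∑ i, (p i u (x (τ i u))
            - (if α ≤ τ i u ∧ τ i u < β then p i u (φ (τ i u)) else 0)
            - p i u (XX (τ i u) β (φ β) + ∫ s in β..u, XX (τ i u) s (v s))) := by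
      rw [Finset.sum_sub_distrib, Finset.sum_sub_distrib]
      abel
    rw [hsum3]
    exact Finset.sum_congr rfl fun i _ => hterm i
  -- a priori bound on the error
  obtain ⟨CΨ, hCΨ0, hΨb⟩ : ∃ CΨ, 0 ≤ CΨ ∧ ∀ u ∈ Icc β γ, ‖Ψ u‖ ≤ CΨ := by
    refine ⟨(K * Mx + Cq) + Cv + K * (M * ‖φ β‖ + M * Cv * (γ - β)), ?_, ?_⟩
    · have h1 : (0:ℝ) ≤ K * Mx := mul_nonneg hK0 hMx0
      have h2 : (0:ℝ) ≤ M * ‖φ β‖ := mul_nonneg hM0.le (norm_nonneg _)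
      have h3 : (0:ℝ) ≤ M * Cv * (γ - β) := mul_nonneg (mul_nonneg hM0.le hCv0) hγβ0
      have h4 : (0:ℝ) ≤ K * (M * ‖φ β‖ + M * Cv * (γ - β)) := mul_nonneg hK0 (by linarith)
      linarith
    · intro u hu
      rw [hΨdef]
      refine (norm_sub_le _ _).trans ?_
      have hA : ‖(∑ i, p i u (x (τ i u)) + q u) - v u‖ ≤ (K * Mx + Cq) + Cv := by
        refine (norm_sub_le _ _).trans ?_
        have h1 : ‖∑ i, p i u (x (τ i u)) + q u‖ ≤ K * Mx + Cq := by
          refine (norm_add_le _ _).trans (add_le_add ?_ ?_)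
          · exact hsum_app u hu _ _ hMx0 (fun i => hMx (τ i u)
              ⟨(hτ i u hu).1, (hτ i u hu).2.trans hu.2⟩)
          · rw [← hq'eq u hu]; exact hq'b u
        exact add_le_add h1 (hvb u)
      have hB : ‖∑ i, p i u (XX (τ i u) β (φ β) + ∫ s in β..u, XX (τ i u) s (v s))‖
          ≤ K * (M * ‖φ β‖ + M * Cv * (γ - β)) := by
        refine hsum_app u hu _ _ ?_ (fun i => ?_)
        · have h2 : (0:ℝ) ≤ M * ‖φ β‖ := mul_nonneg hM0.le (norm_nonneg _)
          have h3 : (0:ℝ) ≤ M * Cv * (γ - β) := mul_nonneg (mul_nonneg hM0.le hCv0) hγβ0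
          linarith
        · refine (norm_add_le _ _).trans (add_le_add ?_ (hinnerb i u hu))
          calc ‖XX (τ i u) β (φ β)‖ ≤ ‖XX (τ i u) β‖ * ‖φ β‖ := (XX (τ i u) β).le_opNorm _
          _ ≤ M * ‖φ β‖ := mul_le_mul_of_nonneg_right
              (hXXM β hββγ (τ i u) ⟨(hτ i u hu).1, (hτ i u hu).2.trans hu.2⟩) (norm_nonneg _)
      linarith
  -- Gronwall-type iteration
  have hiter : ∀ k : ℕ, ∀ r ∈ Icc β γ,
      ‖x r - Y r‖ ≤ (CΨ * (γ - β)) * (K * (r - β)) ^ k / k.factorial := by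
    intro k
    induction k with
    | zero =>
      intro r hr
      simp only [pow_zero, Nat.factorial_zero, Nat.cast_one, div_one, mul_one]
      rw [hdag r hr]
      refine (intervalIntegral.norm_integral_le_of_norm_le_const
        (fun s hs => hΨb s ?_)).trans ?_
      · rw [Set.uIoc_of_le hr.1] at hs
        exact ⟨hs.1.le, hs.2.trans hr.2⟩
      · rw [abs_of_nonneg (by linarith [hr.1] : (0:ℝ) ≤ r - β)]
        exact mul_le_mul_of_nonneg_left (by linarith [hr.2]) hCΨ0
    | succ k ih =>
      intro r hr
      rw [hdag r hr, intervalIntegral.integral_of_le hr.1]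
      have hpt : ∀ u ∈ Ioc β r, ‖Ψ u‖
          ≤ K * ((CΨ * (γ - β)) * (K * (u - β)) ^ k / k.factorial) := by
        intro u hu
        have humem : u ∈ Icc β γ := ⟨hu.1.le, hu.2.trans hr.2⟩
        rw [hΨeq u humem]
        have hKu0 : 0 ≤ K * (u - β) := mul_nonneg hK0 (by linarith [hu.1.le])
        have hD0 : 0 ≤ (CΨ * (γ - β)) * (K * (u - β)) ^ k / k.factorial := by
          have : (0:ℝ) ≤ CΨ * (γ - β) := mul_nonneg hCΨ0 hγβ0
          positivity
        refine hsum_app u humem _ _ hD0 (fun i => ?_)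
        rcases le_or_gt β (τ i u) with hτβ | hτβ
        · rw [if_pos hτβ]
          have hτmem : τ i u ∈ Icc β γ := ⟨hτβ, (hτ i u humem).2.trans humem.2⟩
          refine (ih (τ i u) hτmem).trans ?_
          have hle : K * (τ i u - β) ≤ K * (u - β) :=
            mul_le_mul_of_nonneg_left (by linarith [(hτ i u humem).2]) hK0
          have h0 : 0 ≤ K * (τ i u - β) := mul_nonneg hK0 (by linarith [hτβ])
          gcongr <;> first | exact h0 | exact hle | positivity
        · rw [if_neg (not_le.2 hτβ), norm_zero]
          exact hD0
      have hgint : IntegrableOn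
          (fun u => K * ((CΨ * (γ - β)) * (K * (u - β)) ^ k / k.factorial))
          (Ioc β r) volume := (Continuous.integrableOn_Ioc (by fun_prop))
      calc ‖∫ u in Ioc β r, Ψ u‖ ≤ ∫ u in Ioc β r, ‖Ψ u‖ := norm_integral_le_integral_norm _
        _ ≤ ∫ u in Ioc β r, K * ((CΨ * (γ - β)) * (K * (u - β)) ^ k / k.factorial) :=
            setIntegral_mono_on (intΨ.mono_set (Ioc_subset_Ioc_right hr.2)).norm hgint
              measurableSet_Ioc hpt
        _ = (CΨ * (γ - β)) * (K * (r - β)) ^ (k+1) / (k+1).factorial := by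
            rw [← intervalIntegral.integral_of_le hr.1]
            have hrw : ∀ u : ℝ, K * ((CΨ * (γ - β)) * (K * (u - β)) ^ k / k.factorial)
                = (K ^ (k+1) * (CΨ * (γ - β)) / k.factorial) * (u - β) ^ k := by
              intro u; rw [mul_pow]; ring
            simp_rw [hrw]
            rw [intervalIntegral.integral_const_mul,
              intervalIntegral.integral_comp_sub_right (fun y => y ^ k) β, integral_pow,
              sub_self]
            have hfac : ((k+1).factorial : ℝ) = (k+1) * k.factorial := by
              push_cast [Nat.factorial_succ]; ring
            rw [mul_pow, hfac]
            have hk1 : ((k:ℝ) + 1) ≠ 0 := by positivity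
            have hkf : (k.factorial : ℝ) ≠ 0 := by positivity
            field_simp
            ring
  -- conclusion
  intro t ht
  have hxY : x t = Y t := by
    have h2 : Tendsto (fun k : ℕ => (CΨ * (γ - β)) * (K * (t - β)) ^ k / k.factorial)
        atTop (nhds 0) := by
      simpa [mul_div_assoc] using (FloorSemiring.tendsto_pow_div_factorial_atTop
        (K := ℝ) (K * (t - β))).const_mul (CΨ * (γ - β))
    have h3 : ‖x t - Y t‖ ≤ 0 := ge_of_tendsto' h2 (fun k => hiter k t ht)
    exact sub_eq_zero.mp (norm_le_zero_iff.1 h3)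
  have htαγ : t ∈ Icc α γ := ⟨hαβ.trans ht.1, ht.2⟩
  -- integrability of the two pieces
  have hq_int : IntervalIntegrable (fun s => XX t s (q s)) volume β t := by
    have h1 := hintXI t htαγ q' hq'c.stronglyMeasurable Cq hq'b β t hββγ ht
    rw [intervalIntegrable_iff_integrableOn_Ioc_of_le ht.1] at h1 ⊢
    refine h1.congr_fun (fun s hs => ?_) measurableSet_Ioc
    dsimp only
    rw [hq'eq s ⟨hs.1.le, hs.2.trans ht.2⟩]
  obtain ⟨w, hwsm, hwb, hweq⟩ : ∃ w : ℝ → X, StronglyMeasurable w ∧ (∀ s, ‖w s‖ ≤ K * Cφ) ∧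
      ∀ s ∈ Icc β γ, w s = ∑ i, (if α ≤ τ i s ∧ τ i s < β then p i s (φ (τ i s)) else 0) := by
    refine ⟨fun s => ∑ i, (if τ' i s < β then (p' i s) (φ' (τ' i s)) else 0), ?_, ?_, ?_⟩
    · refine sm_finset_sum Finset.univ fun i => ?_
      refine StronglyMeasurable.ite (measurableSet_lt (hτ'c i).measurable measurable_const)
        ?_ stronglyMeasurable_const
      exact ((hp'c i).clm_apply (hφ'c.comp (hτ'c i))).stronglyMeasurable
    · intro s
      calc ‖∑ i, (if τ' i s < β then (p' i s) (φ' (τ' i s)) else 0)‖ ≤ ∑ i, C i * Cφ := by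
            refine (norm_sum_le _ _).trans (Finset.sum_le_sum fun i _ => ?_)
            split_ifs with h
            · exact ((p' i s).le_opNorm _).trans
                (mul_le_mul (hp'b i s) (hφ'b _) (norm_nonneg _) (hC0 i))
            · simp [mul_nonneg (hC0 i) hCφ0]
      _ = K * Cφ := by rw [hKdef, Finset.sum_mul]
    · intro s hs
      beta_reduce
      refine Finset.sum_congr rfl fun i _ => ?_
      rw [hτ'eq i s hs, hp'eq i s hs]
      rcases lt_or_ge (τ i s) β with hlt | hle
      · rw [if_pos hlt, if_pos ⟨(hτ i s hs).1, hlt⟩,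
          hφ'eq (τ i s) ⟨(hτ i s hs).1, hlt.le⟩]
      · rw [if_neg (not_lt.2 hle), if_neg (by push_neg; exact fun _ => hle)]
  have hχ_int : IntervalIntegrable (fun s => XX t s
      (∑ i, if α ≤ τ i s ∧ τ i s < β then p i s (φ (τ i s)) else 0)) volume β t := by
    have h1 := hintXI t htαγ w hwsm (K * Cφ) hwb β t hββγ ht
    rw [intervalIntegrable_iff_integrableOn_Ioc_of_le ht.1] at h1 ⊢
    refine h1.congr_fun (fun s hs => ?_) measurableSet_Ioc
    dsimp only
    rw [hweq s ⟨hs.1.le, hs.2.trans ht.2⟩]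
  have hsplitv : (∫ s in β..t, XX t s (v s)) = (∫ s in β..t, XX t s (q s))
      + ∫ s in β..t, XX t s (∑ i, if α ≤ τ i s ∧ τ i s < β then p i s (φ (τ i s)) else 0) := by
    rw [← intervalIntegral.integral_add hq_int hχ_int]
    refine intervalIntegral.integral_congr fun s hs => ?_
    rw [Set.uIcc_of_le ht.1] at hs
    rw [hveq s ⟨hs.1, hs.2.trans ht.2⟩, (XX t s).map_add]
  rw [hxY]
  simp only [hYdef]
  rw [hsplitv, add_assoc]
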